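/- Assume Q(s,u) ≠ ∅ for every u ∈ M and every s ∈ ℝ, and assume additionally that P(G_S(U,θ) = s) = 0 for all θ, s ∈ ℝ (the distribution of G_S(U,θ) is atomless for every θ). Then (i) for each fixed s ∈ ℝ the map θ ↦ F_S(s,θ) is continuous on ℝ, and (ii) for each fixed s₀ ∈ ℝ, Q⁺_{s₀}(U*) = Q⁻_{s₀}(U*) with probability 1. -/

import Mathlib

open MeasureTheory Filter Set Topology
open scoped ENNReal

/-- If the inverse images are always nonempty and the distribution of
`G_S(U,θ)` is atomless for every `θ`, then (i) `θ ↦ F_S(s,θ)` is continuous for every `s`, and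
(ii) for each `s₀`, `Q⁺_{s₀}(U*) = Q⁻_{s₀}(U*)` with probability 1. -/
theorem fiducial_continuity_and_sup_eq_inf
    {M Ω : Type*} [MeasurableSpace M] [MeasurableSpace Ω]
    (P : Measure Ω) [IsProbabilityMeasure P]
    (U Ustar : Ω → M) (hU : Measurable U) (hUstar : Measurable Ustar)
    (hdist : Measure.map Ustar P = Measure.map U P)
    (GS : M → ℝ → ℝ) (hGS : Measurable (Function.uncurry GS))
    (hmono : ∀ u : M, Monotone (GS u))
    (hne : ∀ (u : M) (s : ℝ), {θ : ℝ | GS u θ = s}.Nonempty)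
    (hatomless : ∀ θ s : ℝ, P {ω : Ω | GS (U ω) θ = s} = 0) :
    (∀ s : ℝ, Continuous (fun θ : ℝ => (P {ω : Ω | GS (U ω) θ ≤ s}).toReal)) ∧
    (∀ s₀ : ℝ,
      P {ω : Ω | sSup (Real.toEReal '' {θ : ℝ | GS (Ustar ω) θ = s₀})
          = sInf (Real.toEReal '' {θ : ℝ | GS (Ustar ω) θ = s₀})} = 1) := by
  -- each `GS u` is continuous (monotone and surjective)
  have hcont : ∀ u : M, Continuous (GS u) := fun u =>
    (hmono u).continuous_of_surjective (fun t => hne u t)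
  -- measurability of sections
  have hGsec : ∀ θ : ℝ, Measurable (fun u : M => GS u θ) := fun θ =>
    hGS.comp (measurable_id.prodMk measurable_const)
  -- the auxiliary sequence 1/(n+1) → 0
  have hseq : Tendsto (fun n : ℕ => (1 : ℝ) / (n + 1)) atTop (𝓝 0) :=
    tendsto_one_div_add_atTop_nhds_zero_nat
  have hseqpos : ∀ n : ℕ, (0 : ℝ) < 1 / (n + 1) := fun n =>
    div_pos one_pos (by positivity)
  constructor
  · -- Part (i)
    intro s
    set g : ℝ → ℝ≥0∞ := fun θ => P {ω : Ω | GS (U ω) θ ≤ s} with hg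
    have hA : ∀ θ : ℝ, MeasurableSet {ω : Ω | GS (U ω) θ ≤ s} := fun θ =>
      ((hGsec θ).comp hU) measurableSet_Iic
    have hganti : Antitone g := by
      intro θ₁ θ₂ h
      exact measure_mono fun ω hω => le_trans (hmono _ h) hω
    -- P{< s} = P{≤ s}
    have hlt : ∀ θ : ℝ, P {ω : Ω | GS (U ω) θ < s} = g θ := by
      intro θ
      refine le_antisymm (measure_mono fun ω hω => le_of_lt (show GS (U ω) θ < s from hω)) ?_
      have hsub : {ω : Ω | GS (U ω) θ ≤ s}
          ⊆ {ω : Ω | GS (U ω) θ < s} ∪ {ω : Ω | GS (U ω) θ = s} := by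
        intro ω hω
        rcases lt_or_eq_of_le (show GS (U ω) θ ≤ s from hω) with h | h
        · exact Or.inl h
        · exact Or.inr h
      calc g θ ≤ P ({ω : Ω | GS (U ω) θ < s} ∪ {ω : Ω | GS (U ω) θ = s}) :=
            measure_mono hsub
        _ ≤ P {ω : Ω | GS (U ω) θ < s} + P {ω : Ω | GS (U ω) θ = s} :=
            measure_union_le _ _
        _ = P {ω : Ω | GS (U ω) θ < s} := by rw [hatomless θ s, add_zero]
    have hgcont : Continuous g := by
      rw [continuous_iff_continuousAt]
      intro θ₀
      -- right limit : g (θ₀ + 1/(n+1)) → g θ₀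
      have hright : Tendsto (fun n : ℕ => g (θ₀ + 1 / (n + 1))) atTop (𝓝 (g θ₀)) := by
        have hmonoset : Monotone (fun n : ℕ => {ω : Ω | GS (U ω) (θ₀ + 1 / (n + 1)) ≤ s}) := by
          intro n m hnm ω hω
          refine le_trans (hmono _ ?_) hω
          have : (1 : ℝ) / (m + 1) ≤ 1 / (n + 1) := by
            apply one_div_le_one_div_of_le (by positivity)
            exact_mod_cast by exact_mod_cast add_le_add_left (Nat.cast_le.2 hnm) 1
          linarith
        have hU1 := tendsto_measure_iUnion_atTop (μ := P) hmonoset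
        have hUeq : P (⋃ n : ℕ, {ω : Ω | GS (U ω) (θ₀ + 1 / (n + 1)) ≤ s}) = g θ₀ := by
          refine le_antisymm (measure_mono ?_) ?_
          · refine iUnion_subset fun n ω hω => ?_
            exact le_trans (hmono _ (by linarith [hseqpos n])) hω
          · rw [← hlt θ₀]
            refine measure_mono fun ω hω => ?_
            have htd : Tendsto (fun n : ℕ => GS (U ω) (θ₀ + 1 / (n + 1))) atTop
                (𝓝 (GS (U ω) θ₀)) := by
              have : Tendsto (fun n : ℕ => θ₀ + 1 / (n + 1 : ℝ)) atTop (𝓝 (θ₀ + 0)) :=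
                tendsto_const_nhds.add hseq
              rw [add_zero] at this
              exact ((hcont (U ω)).tendsto θ₀).comp this
            have := htd.eventually (eventually_lt_nhds hω)
            rcases this.exists with ⟨n, hn⟩
            exact mem_iUnion.2 ⟨n, le_of_lt hn⟩
        rw [hUeq] at hU1
        exact hU1
      -- left limit : g (θ₀ - 1/(n+1)) → g θ₀
      have hleft : Tendsto (fun n : ℕ => g (θ₀ - 1 / (n + 1))) atTop (𝓝 (g θ₀)) := by
        have hantiset : Antitone (fun n : ℕ => {ω : Ω | GS (U ω) (θ₀ - 1 / (n + 1)) ≤ s}) := by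
          intro n m hnm ω hω
          refine le_trans (hmono _ ?_) hω
          have : (1 : ℝ) / (m + 1) ≤ 1 / (n + 1) := by
            apply one_div_le_one_div_of_le (by positivity)
            exact_mod_cast add_le_add_left (Nat.cast_le.2 hnm) 1
          linarith
        have hI1 := tendsto_measure_iInter_atTop (μ := P)
          (fun n => (hA _).nullMeasurableSet) hantiset ⟨0, measure_ne_top _ _⟩
        have hIeq : P (⋂ n : ℕ, {ω : Ω | GS (U ω) (θ₀ - 1 / (n + 1)) ≤ s}) = g θ₀ := by
          refine le_antisymm ?_ (measure_mono ?_)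
          · refine measure_mono fun ω hω => ?_
            have htd : Tendsto (fun n : ℕ => GS (U ω) (θ₀ - 1 / (n + 1))) atTop
                (𝓝 (GS (U ω) θ₀)) := by
              have : Tendsto (fun n : ℕ => θ₀ - 1 / (n + 1 : ℝ)) atTop (𝓝 (θ₀ - 0)) :=
                tendsto_const_nhds.sub hseq
              rw [sub_zero] at this
              exact ((hcont (U ω)).tendsto θ₀).comp this
            exact le_of_tendsto htd (Eventually.of_forall fun n => mem_iInter.1 hω n)
          · intro ω hω
            exact mem_iInter.2 fun n => le_trans (hmono _ (by linarith [hseqpos n])) hω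
        rw [hIeq] at hI1
        exact hI1
      refine tendsto_order.2 ⟨?_, ?_⟩
      · intro a ha
        rcases (hright.eventually (eventually_gt_nhds ha)).exists with ⟨n, hn⟩
        filter_upwards [Iio_mem_nhds (show θ₀ < θ₀ + 1 / (n + 1) by linarith [hseqpos n])]
          with θ hθ
        exact lt_of_lt_of_le hn (hganti (le_of_lt hθ))
      · intro b hb
        rcases (hleft.eventually (eventually_lt_nhds hb)).exists with ⟨n, hn⟩
        filter_upwards [Ioi_mem_nhds (show θ₀ - 1 / (n + 1) < θ₀ by linarith [hseqpos n])]
          with θ hθ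
        exact lt_of_le_of_lt (hganti (le_of_lt hθ)) hn
    rw [continuous_iff_continuousAt]
    intro θ₀
    exact (ENNReal.tendsto_toReal (measure_ne_top P _)).comp (hgcont.continuousAt)
  · -- Part (ii)
    intro s₀
    set bad : Set Ω := ⋃ r : ℚ, {ω : Ω | GS (Ustar ω) (r : ℝ) = s₀} with hbad
    have hbadnull : P bad = 0 := by
      refine measure_iUnion_null fun r => ?_
      have hT : MeasurableSet {u : M | GS u (r : ℝ) = s₀} :=
        (hGsec (r : ℝ)) (measurableSet_singleton s₀)
      have h1 : {ω : Ω | GS (Ustar ω) (r : ℝ) = s₀} = Ustar ⁻¹' {u : M | GS u (r : ℝ) = s₀} :=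
        rfl
      have h2 : {ω : Ω | GS (U ω) (r : ℝ) = s₀} = U ⁻¹' {u : M | GS u (r : ℝ) = s₀} := rfl
      rw [h1, ← Measure.map_apply hUstar hT, hdist, Measure.map_apply hU hT, ← h2]
      exact hatomless r s₀
    -- the bad set contains the complement of the good set
    have hsub : {ω : Ω | sSup (Real.toEReal '' {θ : ℝ | GS (Ustar ω) θ = s₀})
          = sInf (Real.toEReal '' {θ : ℝ | GS (Ustar ω) θ = s₀})}ᶜ ⊆ bad := by
      intro ω hω
      simp only [mem_compl_iff, mem_setOf_eq] at hω
      set S : Set EReal := Real.toEReal '' {θ : ℝ | GS (Ustar ω) θ = s₀} with hS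
      have hSne : S.Nonempty := (hne (Ustar ω) s₀).image _
      have hlt : sInf S < sSup S :=
        lt_of_le_of_ne (sInf_le_sSup hSne) (fun h => hω h.symm)
      -- find x ∈ S with sInf S < x
      have hx : ∃ x ∈ S, sInf S < x := by
        by_contra h
        push_neg at h
        exact absurd (sSup_le fun x hx => h x hx) (not_le.2 hlt)
      rcases hx with ⟨x, hxS, hxlt⟩
      have hy : ∃ y ∈ S, y < x := by
        by_contra h
        push_neg at h
        exact absurd (le_sInf fun y hy => h y hy) (not_le.2 hxlt)
      rcases hy with ⟨y, hyS, hylt⟩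
      rcases hxS with ⟨a, ha, rfl⟩
      rcases hyS with ⟨b, hb, rfl⟩
      have hba : b < a := EReal.coe_lt_coe_iff.1 hylt
      rcases exists_rat_btwn hba with ⟨r, hr1, hr2⟩
      refine mem_iUnion.2 ⟨r, ?_⟩
      have h1 : GS (Ustar ω) (r : ℝ) ≤ s₀ := ha ▸ hmono _ (le_of_lt hr2)
      have h2 : s₀ ≤ GS (Ustar ω) (r : ℝ) := hb ▸ hmono _ (le_of_lt hr1)
      exact le_antisymm h1 h2
    set good := {ω : Ω | sSup (Real.toEReal '' {θ : ℝ | GS (Ustar ω) θ = s₀})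
          = sInf (Real.toEReal '' {θ : ℝ | GS (Ustar ω) θ = s₀})}
    have hglb : (1 : ℝ≥0∞) ≤ P good := by
      have hcnull : P goodᶜ = 0 := measure_mono_null hsub hbadnull
      have : P Set.univ ≤ P good + P goodᶜ := by
        rw [← Set.union_compl_self good]
        exact measure_union_le _ _
      rw [measure_univ, hcnull, add_zero] at this
      exact this
    exact le_antisymm prob_le_one hglb
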